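/- Let w be a word of length n and a a letter. Suppose (h₁,p₁) and (h₂,p₂) are abelian periods of w with p₁ ≤ p₂, and suppose they have the same positive tail length, i.e., (n − h₁) mod p₁ = (n − h₂) mod p₂ = t with t > 0. If (h₁,p₁) is an abelian period of the word wa (w extended by the letter a), then (h₂,p₂) is also an abelian period of wa. -/

import Mathlib

/-- The Parikh vector of a word `v`: the number of occurrences of each letter. -/
def parikh {α : Type*} [DecidableEq α] (v : List α) : α → ℕ := fun a => v.count a

/-- The norm of a Parikh vector: the sum of its components. -/
def pnorm {α : Type*} [Fintype α] (P : α → ℕ) : ℕ := ∑ a, P a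

/-- Non-strict containment of Parikh vectors: `P ⊆ Q`. -/
def PLe {α : Type*} (P Q : α → ℕ) : Prop := ∀ a, P a ≤ Q a

/-- Strict containment of Parikh vectors: `P ⊂ Q`, i.e. componentwise `≤` and smaller norm. -/
def PLt {α : Type*} [Fintype α] (P Q : α → ℕ) : Prop :=
  (∀ a, P a ≤ Q a) ∧ pnorm P < pnorm Q

/-- The substring `w[i..j]` of `w`, from position `i` to position `j`, both included. -/
def substr {α : Type*} (w : List α) (i j : ℕ) : List α := (w.drop i).take (j + 1 - i)

/-- `(b,h,t,e)` is an occurrence of a substring of `w` with abelian period `P`: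
`w[b..e] = u₀u₁⋯u_{k-1}u_k` for some `k ≥ 2`, with `|u₀| = h`, `|u_k| = t`,
`𝒫_{u_1} = ⋯ = 𝒫_{u_{k-1}} = P`, `𝒫_{u₀} ⊂ P` and `𝒫_{u_k} ⊂ P`. -/
def IsOcc {α : Type*} [Fintype α] [DecidableEq α]
    (w : List α) (P : α → ℕ) (b h t e : ℕ) : Prop :=
  b ≤ e ∧ e < w.length ∧
  ∃ (u0 uk : List α) (us : List (List α)),
    substr w b e = u0 ++ us.flatten ++ uk ∧
    u0.length = h ∧ uk.length = t ∧
    1 ≤ us.length ∧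
    (∀ u ∈ us, parikh u = P) ∧
    PLt (parikh u0) P ∧ PLt (parikh uk) P

/-- An occurrence `(b,h,t,e)` with abelian period `P` is left-maximal if there is no
occurrence `(b-1,h',t',e)` with the same abelian period `P`. -/
def LeftMaximal {α : Type*} [Fintype α] [DecidableEq α]
    (w : List α) (P : α → ℕ) (b h t e : ℕ) : Prop :=
  IsOcc w P b h t e ∧ ∀ b' h' t', b' + 1 = b → ¬ IsOcc w P b' h' t' e

/-- An occurrence `(b,h,t,e)` with abelian period `P` is right-maximal if there is no
occurrence `(b,h',t',e+1)` with the same abelian period `P`. -/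
def RightMaximal {α : Type*} [Fintype α] [DecidableEq α]
    (w : List α) (P : α → ℕ) (b h t e : ℕ) : Prop :=
  IsOcc w P b h t e ∧ ∀ h' t', ¬ IsOcc w P b h' t' (e + 1)

/-- An abelian run of period `P` is a maximal occurrence `(b,h,t,e)` with abelian period `P`
such that `e - b - h - t + 1 ≥ 2|P|`. -/
def IsAbelianRun {α : Type*} [Fintype α] [DecidableEq α]
    (w : List α) (P : α → ℕ) (b h t e : ℕ) : Prop :=
  LeftMaximal w P b h t e ∧ RightMaximal w P b h t e ∧
  b + h + t + 2 * pnorm P ≤ e + 1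

/-- `(h,p)` is an abelian period of a word `w` (for `h ≥ 0`, `p ≥ 1`):
`w = u₀u₁⋯u_{k-1}u_k` with `k > 2`, `|u₀| = h`, `|u_i| = p` for `1 ≤ i ≤ k-1`,
all middle factors have the same Parikh vector `P`, and `𝒫_{u₀} ⊂ P`, `𝒫_{u_k} ⊂ P`. -/
def IsAbelianPeriodHP {α : Type*} [Fintype α] [DecidableEq α]
    (w : List α) (h p : ℕ) : Prop :=
  1 ≤ p ∧
  ∃ (u0 uk : List α) (us : List (List α)) (P : α → ℕ),
    w = u0 ++ us.flatten ++ uk ∧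
    u0.length = h ∧
    2 ≤ us.length ∧
    (∀ u ∈ us, u.length = p ∧ parikh u = P) ∧
    PLt (parikh u0) P ∧ PLt (parikh uk) P

lemma pnorm_parikh {α : Type*} [Fintype α] [DecidableEq α] (v : List α) :
    pnorm (parikh v) = v.length := by
  induction v with
  | nil => simp [pnorm, parikh]
  | cons x v ih =>
    simp only [pnorm, parikh, List.count_cons] at *
    rw [Finset.sum_add_distrib, ih]
    simp [Finset.sum_ite_eq']

lemma eq_of_le_of_pnorm_le {α : Type*} [Fintype α] (f g : α → ℕ)
    (h : ∀ b, f b ≤ g b) (hn : pnorm g ≤ pnorm f) : f = g := by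
  funext b
  by_contra hb
  have h1 : f b < g b := lt_of_le_of_ne (h b) hb
  have : pnorm f < pnorm g :=
    Finset.sum_lt_sum (fun i _ => h i) ⟨b, Finset.mem_univ b, h1⟩
  omega

lemma flatten_length {α : Type*} (us : List (List α)) (p : ℕ)
    (h : ∀ u ∈ us, u.length = p) : us.flatten.length = us.length * p := by
  induction us with
  | nil => simp
  | cons u us ih =>
    simp only [List.flatten_cons, List.length_append, List.length_cons]
    rw [ih (fun u hu => h u (by simp [hu])), h u (by simp)]
    ring

lemma flatten_count {α : Type*} [DecidableEq α] (us : List (List α)) (P : α → ℕ)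
    (h : ∀ u ∈ us, parikh u = P) (b : α) :
    us.flatten.count b = us.length * P b := by
  induction us with
  | nil => simp
  | cons u us ih =>
    simp only [List.flatten_cons, List.count_append, List.length_cons]
    rw [ih (fun u hu => h u (by simp [hu]))]
    have := congrFun (h u (by simp)) b
    simp only [parikh] at this
    rw [this]; ring

lemma drop_flatten {α : Type*} (us : List (List α)) (p i : ℕ)
    (h : ∀ u ∈ us, u.length = p) :
    us.flatten.drop (i * p) = (us.drop i).flatten := by
  induction us generalizing i with
  | nil => simp
  | cons u us ih =>
    cases i with
    | zero => simp
    | succ i =>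
      have hu : u.length = p := h u (by simp)
      have : (i+1) * p = u.length + i * p := by rw [hu]; ring
      rw [List.flatten_cons, this, List.drop_length_add_append, ih i (fun u hu => h u (by simp [hu]))]
      simp

lemma suffix_count {α : Type*} [DecidableEq α]
    (w u0 uk : List α) (us : List (List α)) (p : ℕ) (P : α → ℕ)
    (hw : w = u0 ++ us.flatten ++ uk)
    (hus : ∀ u ∈ us, u.length = p ∧ parikh u = P)
    (j m : ℕ) (hj : j ≤ us.length)
    (hm : m + j * p = u0.length + us.flatten.length)
    (b : α) :
    (w.drop m).count b = j * P b + uk.count b := by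
  have hlen : ∀ u ∈ us, u.length = p := fun u hu => (hus u hu).1
  have hF : us.flatten.length = us.length * p := flatten_length us p hlen
  have hjk : j * p ≤ us.length * p := Nat.mul_le_mul_right p hj
  have hsub : (us.length - j) * p = us.length * p - j * p := Nat.sub_mul _ _ _
  have hm' : m = u0.length + (us.length - j) * p := by omega
  have h1 : w.drop m = (us.drop (us.length - j)).flatten ++ uk := by
    rw [hw, hm', List.append_assoc, List.drop_length_add_append,
      List.drop_append_of_le_length (by omega),
      drop_flatten us p _ hlen]
  rw [h1, List.count_append,
    flatten_count (us.drop (us.length - j)) P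
      (fun u hu => (hus u (List.mem_of_mem_drop hu)).2) b,
    List.length_drop]
  congr 2
  omega

lemma mod_helper (F r p k : ℕ) (hF : F = k * p) (hr : r < p) : (F + r) % p = r := by
  subst hF
  rw [Nat.mul_comm, Nat.mul_add_mod]
  exact Nat.mod_eq_of_lt hr


/-- If two abelian periods of `w` with `p₁ ≤ p₂` have the same positive tail length and the
smaller one extends to `wa`, then so does the larger one. -/
theorem abelianPeriod_extend {α : Type*} [Fintype α] [DecidableEq α]
    (w : List α) (a : α) (h₁ p₁ h₂ p₂ t : ℕ)
    (hp : p₁ ≤ p₂)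
    (hper₁ : IsAbelianPeriodHP w h₁ p₁) (hper₂ : IsAbelianPeriodHP w h₂ p₂)
    (ht₁ : (w.length - h₁) % p₁ = t) (ht₂ : (w.length - h₂) % p₂ = t) (htpos : 0 < t)
    (hext : IsAbelianPeriodHP (w ++ [a]) h₁ p₁) :
    IsAbelianPeriodHP (w ++ [a]) h₂ p₂ := by
  obtain ⟨hp₂pos, u0, uk, us, P, hw2, hh2, hk2, hblocks2, hu0lt2, huklt2⟩ := hper₂
  obtain ⟨hp₁pos, w0, wk, ws, Q₁, hw1, hh1, hk1, hblocks1, hw0lt1, hwklt1⟩ := hper₁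
  obtain ⟨-, v0, vk, vs, Q, hwa, hv0, hkv, hblocksv, hv0lt, hvklt⟩ := hext
  -- pnorms of period vectors
  obtain ⟨ub, hub⟩ := List.exists_mem_of_ne_nil us (List.length_pos_iff.mp (by omega))
  obtain ⟨wb, hwb⟩ := List.exists_mem_of_ne_nil ws (List.length_pos_iff.mp (by omega))
  obtain ⟨vb, hvb⟩ := List.exists_mem_of_ne_nil vs (List.length_pos_iff.mp (by omega))
  have hpnP : pnorm P = p₂ := by
    rw [← (hblocks2 ub hub).2, pnorm_parikh, (hblocks2 ub hub).1]
  have hpnQ₁ : pnorm Q₁ = p₁ := by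
    rw [← (hblocks1 wb hwb).2, pnorm_parikh, (hblocks1 wb hwb).1]
  have hpnQ : pnorm Q = p₁ := by
    rw [← (hblocksv vb hvb).2, pnorm_parikh, (hblocksv vb hvb).1]
  -- flatten lengths
  have hF2 : us.flatten.length = us.length * p₂ :=
    flatten_length us p₂ (fun u hu => (hblocks2 u hu).1)
  have hF1 : ws.flatten.length = ws.length * p₁ :=
    flatten_length ws p₁ (fun u hu => (hblocks1 u hu).1)
  have hFv : vs.flatten.length = vs.length * p₁ :=
    flatten_length vs p₁ (fun u hu => (hblocksv u hu).1)
  have hF2ge : 2 * p₂ ≤ us.flatten.length := by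
    rw [hF2]; exact Nat.mul_le_mul_right p₂ hk2
  have hF1ge : 2 * p₁ ≤ ws.flatten.length := by
    rw [hF1]; exact Nat.mul_le_mul_right p₁ hk1
  have hFvge : 2 * p₁ ≤ vs.flatten.length := by
    rw [hFv]; exact Nat.mul_le_mul_right p₁ hkv
  -- total length equations
  have hlen2 : w.length = h₂ + us.flatten.length + uk.length := by
    rw [hw2]; simp [hh2]; omega
  have hlen1 : w.length = h₁ + ws.flatten.length + wk.length := by
    rw [hw1]; simp [hh1]; omega
  have hlenv : w.length + 1 = h₁ + vs.flatten.length + vk.length := by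
    have h := congrArg List.length hwa
    simp only [List.length_append, List.length_cons, List.length_nil, hv0] at h
    omega
  -- tail lengths
  have hukp : uk.length < p₂ := by
    have := huklt2.2; rw [pnorm_parikh, hpnP] at this; exact this
  have hwkp : wk.length < p₁ := by
    have := hwklt1.2; rw [pnorm_parikh, hpnQ₁] at this; exact this
  have hvkp : vk.length < p₁ := by
    have := hvklt.2; rw [pnorm_parikh, hpnQ] at this; exact this
  have hukt : uk.length = t := by
    have e : w.length - h₂ = us.flatten.length + uk.length := by omega
    rw [e, mod_helper _ _ _ us.length hF2 hukp] at ht₂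
    exact ht₂
  have hwkt : wk.length = t := by
    have e : w.length - h₁ = ws.flatten.length + wk.length := by omega
    rw [e, mod_helper _ _ _ ws.length hF1 hwkp] at ht₁
    exact ht₁
  have htp1 : t < p₁ := hwkt ▸ hwkp
  have htp2 : t < p₂ := hukt ▸ hukp
  -- vk length
  have hvkmod : vk.length = (t + 1) % p₁ := by
    have e : p₁ * vs.length + vk.length = p₁ * ws.length + (t + 1) := by
      have c1 : vs.flatten.length = p₁ * vs.length := by rw [hFv]; ring
      have c2 : ws.flatten.length = p₁ * ws.length := by rw [hF1]; ring
      omega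
    calc vk.length = vk.length % p₁ := (Nat.mod_eq_of_lt hvkp).symm
      _ = (p₁ * vs.length + vk.length) % p₁ := (Nat.mul_add_mod _ _ _).symm
      _ = (p₁ * ws.length + (t + 1)) % p₁ := by rw [e]
      _ = (t + 1) % p₁ := Nat.mul_add_mod _ _ _
  -- suffix identifications
  have huk : w.drop (h₂ + us.flatten.length) = uk := by
    rw [hw2]
    have := List.drop_left (l₁ := u0 ++ us.flatten) (l₂ := uk)
    simpa [hh2] using this
  have hwk : w.drop (h₁ + ws.flatten.length) = wk := by
    rw [hw1]
    have := List.drop_left (l₁ := w0 ++ ws.flatten) (l₂ := wk)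
    simpa [hh1] using this
  have hvk : (w ++ [a]).drop (h₁ + vs.flatten.length) = vk := by
    rw [hwa]
    have := List.drop_left (l₁ := v0 ++ vs.flatten) (l₂ := vk)
    simpa [hv0] using this
  have hwkuk : wk = uk := by
    rw [← huk, ← hwk]
    congr 1
    omega
  have hwadrop : ∀ m, m ≤ w.length → (w ++ [a]).drop m = w.drop m ++ [a] :=
    fun m hm => List.drop_append_of_le_length hm
  -- Q₁ ≤ P componentwise
  have hQ1P : ∀ b, Q₁ b ≤ P b := by
    intro b
    have d1 := suffix_count w w0 wk ws p₁ Q₁ hw1 hblocks1 1 (w.length - t - p₁)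
      (by omega) (by rw [hh1]; omega) b
    have d2 := suffix_count w u0 uk us p₂ P hw2 hblocks2 1 (w.length - t - p₂)
      (by omega) (by rw [hh2]; omega) b
    have hdd : w.drop (w.length - t - p₁) = (w.drop (w.length - t - p₂)).drop (p₂ - p₁) := by
      rw [List.drop_drop]; congr 1; omega
    have hle : (w.drop (w.length - t - p₁)).count b ≤ (w.drop (w.length - t - p₂)).count b := by
      rw [hdd]; exact (List.drop_sublist _ _).count_le b
    rw [hwkuk] at d1
    simp only [one_mul] at d1 d2
    omega
  -- key: uk.count a + 1 ≤ Q₁ a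
  have hkey1 : uk.count a + 1 ≤ Q₁ a := by
    rcases Nat.lt_or_ge (t + 1) p₁ with hc | hc
    · -- t + 1 < p₁
      have hvkl : vk.length = t + 1 := by rw [hvkmod]; exact Nat.mod_eq_of_lt hc
      have hFveq : vs.flatten.length = ws.flatten.length := by omega
      have hvkeq : vk = uk ++ [a] := by
        rw [← hvk, show h₁ + vs.flatten.length = h₂ + us.flatten.length by omega,
          hwadrop _ (by omega), huk]
      have e1 := suffix_count (w ++ [a]) v0 vk vs p₁ Q hwa hblocksv 1 (w.length - t - p₁)
        (by omega) (by rw [hv0]; omega) a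
      have d1 := suffix_count w w0 wk ws p₁ Q₁ hw1 hblocks1 1 (w.length - t - p₁)
        (by omega) (by rw [hh1]; omega) a
      have e1' : ((w ++ [a]).drop (w.length - t - p₁)).count a
          = (w.drop (w.length - t - p₁)).count a + 1 := by
        rw [hwadrop _ (by omega), List.count_append]; simp
      have hvca : vk.count a = uk.count a + 1 := by
        rw [hvkeq, List.count_append]; simp
      have hle := hvklt.1 a
      simp only [parikh] at hle
      rw [hwkuk] at d1
      simp only [one_mul] at e1 d1
      omega
    · -- t + 1 = p₁
      have hp1t : p₁ = t + 1 := by omega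
      have hvkl : vk.length = 0 := by rw [hvkmod, hp1t]; simp
      have hvknil : vk = [] := List.eq_nil_of_length_eq_zero hvkl
      have hFveq : vs.flatten.length = ws.flatten.length + p₁ := by omega
      have e1 := suffix_count (w ++ [a]) v0 vk vs p₁ Q hwa hblocksv 1 (w.length - t)
        (by omega) (by rw [hv0]; omega) a
      have e2 := suffix_count (w ++ [a]) v0 vk vs p₁ Q hwa hblocksv 2 (w.length - t - p₁)
        hkv (by rw [hv0]; omega) a
      have d1 := suffix_count w w0 wk ws p₁ Q₁ hw1 hblocks1 1 (w.length - t - p₁)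
        (by omega) (by rw [hh1]; omega) a
      have e1' : ((w ++ [a]).drop (w.length - t)).count a = uk.count a + 1 := by
        rw [show w.length - t = h₂ + us.flatten.length by omega,
          hwadrop _ (by omega), huk, List.count_append]
        simp
      have e2' : ((w ++ [a]).drop (w.length - t - p₁)).count a
          = (w.drop (w.length - t - p₁)).count a + 1 := by
        rw [hwadrop _ (by omega), List.count_append]; simp
      rw [hwkuk] at d1
      simp only [hvknil, List.count_nil, one_mul] at e1 e2 d1
      omega
  have hkey : uk.count a + 1 ≤ P a := le_trans hkey1 (hQ1P a)
  -- componentwise bound for the new tail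
  have hnewle : ∀ b, parikh (uk ++ [a]) b ≤ P b := by
    intro b
    simp only [parikh, List.count_append]
    by_cases hb : b = a
    · subst hb
      have : List.count b [b] = 1 := by simp
      omega
    · have h0 : List.count b [a] = 0 := by
        simp [List.count_singleton']
        exact fun h => absurd h.symm hb
      have := huklt2.1 b
      simp only [parikh] at this
      omega
  -- construct the decomposition of w ++ [a]
  rcases Nat.lt_or_ge (t + 1) p₂ with hc2 | hc2
  · -- new tail uk ++ [a]
    refine ⟨hp₂pos, u0, uk ++ [a], us, P, ?_, hh2, hk2, hblocks2, hu0lt2, ?_⟩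
    · rw [hw2]; simp [List.append_assoc]
    · constructor
      · exact hnewle
      · rw [pnorm_parikh, hpnP]
        simp
        omega
  · -- t + 1 = p₂ : new full block, empty tail
    have hp2t : p₂ = t + 1 := by omega
    have hnew : parikh (uk ++ [a]) = P :=
      eq_of_le_of_pnorm_le _ _ hnewle (by rw [pnorm_parikh, hpnP]; simp; omega)
    refine ⟨hp₂pos, u0, [], us ++ [uk ++ [a]], P, ?_, hh2, ?_, ?_, hu0lt2, ?_⟩
    · rw [hw2]; simp [List.flatten_append, List.append_assoc]
    · simp; omega
    · intro u hu
      rcases List.mem_append.mp hu with h | h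
      · exact hblocks2 u h
      · simp only [List.mem_singleton] at h
        subst h
        refine ⟨?_, hnew⟩
        simp
        omega
    · constructor
      · intro b; simp [parikh]
      · rw [pnorm_parikh]
        simp [pnorm] at *
        omega
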